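/- Let k be a field and A a k-algebra of finite expansion. Then the following are equivalent: (a) Spec A is totally disconnected; (b) every prime ideal of A is maximal; (c) for every prime p of A, the residue field κ(p) is an algebraic field extension of k. -/

import Mathlib

/-- An `R`-algebra `A` is of *finite expansion* if it is integral over a finitely
generated subalgebra, i.e. there is a finite set of quasi-generators. -/
def Algebra.FiniteExpansion (R A : Type*) [CommRing R] [CommRing A] [Algebra R A] : Prop :=
  ∃ s : Finset A, Algebra.IsIntegral (Algebra.adjoin R (s : Set A)) A

open Polynomial PrimeSpectrum in
/-- If `A` is integral over a field `k`, then any two primes of `A` can be separated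
by a clopen set in `Spec A`. -/
lemma exists_isClopen_of_isIntegral {k A : Type*} [Field k] [CommRing A] [Algebra k A]
    [Algebra.IsIntegral k A] (P Q : PrimeSpectrum A) {x : A}
    (hxP : x ∈ P.asIdeal) (hxQ : x ∉ Q.asIdeal) :
    ∃ U : Set (PrimeSpectrum A), IsClopen U ∧ P ∈ U ∧ Q ∉ U := by
  obtain ⟨f, hfm, hf⟩ := Algebra.IsIntegral.isIntegral (R := k) x
  obtain ⟨g, hfg, hgd⟩ := f.exists_eq_pow_rootMultiplicity_mul_and_not_dvd hfm.ne_zero 0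
  set m := f.rootMultiplicity 0 with hm
  rw [show (Polynomial.X - Polynomial.C (0 : k)) = Polynomial.X by rw [map_zero, sub_zero]]
    at hfg hgd
  have hc : g.coeff 0 ≠ 0 := fun h => hgd (Polynomial.X_dvd_iff.mpr h)
  have hxy : x ^ m * Polynomial.aeval x g = 0 := by
    have h0 : Polynomial.aeval x f = 0 := by rw [Polynomial.aeval_def]; exact hf
    rw [hfg, map_mul, map_pow, Polynomial.aeval_X] at h0
    exact h0
  have hsum : Polynomial.aeval x g
      = x * Polynomial.aeval x g.divX + algebraMap k A (g.coeff 0) := by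
    conv_lhs => rw [← Polynomial.X_mul_divX_add g]
    rw [map_add, map_mul, Polynomial.aeval_X, Polynomial.aeval_C]
  have hcy : algebraMap k A (g.coeff 0)
      = Polynomial.aeval x g - x * Polynomial.aeval x g.divX := by
    rw [hsum]; ring
  have key : ∀ r : PrimeSpectrum A, x ∈ r.asIdeal → Polynomial.aeval x g ∈ r.asIdeal → False := by
    intro r hxr hyr
    have hmem : algebraMap k A (g.coeff 0) ∈ r.asIdeal := by
      rw [hcy]
      exact r.asIdeal.sub_mem hyr (r.asIdeal.mul_mem_right _ hxr)
    exact r.isPrime.ne_top (r.asIdeal.eq_top_of_isUnit_mem hmem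
      ((algebraMap k A).isUnit_map (Ne.isUnit hc)))
  have key2 : ∀ r : PrimeSpectrum A, Polynomial.aeval x g ∉ r.asIdeal → x ∈ r.asIdeal := by
    intro r hyr
    have h0 : x ^ m * Polynomial.aeval x g ∈ r.asIdeal := by
      rw [hxy]; exact r.asIdeal.zero_mem
    rcases r.isPrime.mem_or_mem h0 with h | h
    · exact r.isPrime.mem_of_pow_mem _ h
    · exact absurd h hyr
  refine ⟨zeroLocus {x}, ⟨isClosed_zeroLocus _, ?_⟩, ?_, ?_⟩
  · rw [← isClosed_compl_iff]
    have hcompl : (zeroLocus {x} : Set (PrimeSpectrum A))ᶜ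
        = zeroLocus {Polynomial.aeval x g} := by
      ext r
      simp only [Set.mem_compl_iff, mem_zeroLocus, Set.singleton_subset_iff, SetLike.mem_coe]
      constructor
      · intro h
        by_contra h'
        exact h (key2 r h')
      · intro h h'
        exact key r h' h
    rw [hcompl]
    exact isClosed_zeroLocus _
  · rw [mem_zeroLocus, Set.singleton_subset_iff]; exact hxP
  · rw [mem_zeroLocus, Set.singleton_subset_iff]; exact hxQ

/-- If `A` is integral over a field `k`, then `Spec A` is totally separated. -/
lemma totallySeparatedSpace_of_isIntegral {k A : Type*} [Field k] [CommRing A] [Algebra k A]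
    [Algebra.IsIntegral k A] : TotallySeparatedSpace (PrimeSpectrum A) := by
  constructor
  intro P _ Q _ hPQ
  have hne : P.asIdeal ≠ Q.asIdeal := fun h => hPQ (PrimeSpectrum.ext h)
  by_cases hle : P.asIdeal ≤ Q.asIdeal
  · have hle' : ¬Q.asIdeal ≤ P.asIdeal := fun h => hne (le_antisymm hle h)
    obtain ⟨x, hxQ, hxP⟩ := SetLike.not_le_iff_exists.mp hle'
    obtain ⟨U, hU, hQU, hPU⟩ := exists_isClopen_of_isIntegral (k := k) Q P hxQ hxP
    exact ⟨Uᶜ, U, hU.compl.isOpen, hU.isOpen, hPU, hQU, by simp, disjoint_compl_left⟩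
  · obtain ⟨x, hxP, hxQ⟩ := SetLike.not_le_iff_exists.mp hle
    obtain ⟨U, hU, hPU, hQU⟩ := exists_isClopen_of_isIntegral (k := k) P Q hxP hxQ
    exact ⟨U, Uᶜ, hU.isOpen, hU.compl.isOpen, hPU, hQU, by simp, disjoint_compl_right⟩

/-- If all residue fields of `A` are algebraic over `k`, then `A` is integral over `k`. -/
lemma isIntegral_of_forall_isAlgebraic {k A : Type*} [Field k] [CommRing A] [Algebra k A]
    (h3 : ∀ p : Ideal A, p.IsPrime → Algebra.IsAlgebraic k (FractionRing (A ⧸ p))) :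
    Algebra.IsIntegral k A := by
  refine ⟨fun x => ?_⟩
  by_contra hx
  let S : Submonoid A :=
    { carrier := Set.range fun f : {f : Polynomial k // f.Monic} => Polynomial.aeval x f.1
      one_mem' := ⟨⟨1, Polynomial.monic_one⟩, map_one _⟩
      mul_mem' := by
        rintro _ _ ⟨f, rfl⟩ ⟨g, rfl⟩
        exact ⟨⟨f.1 * g.1, f.2.mul g.2⟩, map_mul _ _ _⟩ }
  have hdisj : Disjoint ((⊥ : Ideal A) : Set A) (S : Set A) := by
    rw [Set.disjoint_left]
    rintro z hz ⟨f, rfl⟩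
    rw [SetLike.mem_coe, Ideal.mem_bot] at hz
    exact hx ⟨f.1, f.2, by rw [← Polynomial.aeval_def]; exact hz⟩
  obtain ⟨p, hp, -, hpS⟩ := Ideal.exists_le_prime_disjoint ⊥ S hdisj
  haveI := hp
  haveI := h3 p hp
  obtain ⟨g, hg0, hg⟩ := (Algebra.IsAlgebraic.isAlgebraic
    (algebraMap (A ⧸ p) (FractionRing (A ⧸ p)) (Ideal.Quotient.mk p x)) : IsAlgebraic k _)
  have hfm : (g * Polynomial.C (g.leadingCoeff)⁻¹).Monic :=
    Polynomial.monic_mul_leadingCoeff_inv hg0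
  set f := g * Polynomial.C (g.leadingCoeff)⁻¹ with hfdef
  have hfz : Polynomial.aeval
      (algebraMap (A ⧸ p) (FractionRing (A ⧸ p)) (Ideal.Quotient.mk p x)) f = 0 := by
    rw [hfdef, map_mul, hg, zero_mul]
  have h1 : Polynomial.aeval (Ideal.Quotient.mk p x) f = 0 := by
    apply IsFractionRing.injective (A ⧸ p) (FractionRing (A ⧸ p))
    rw [← Polynomial.aeval_algebraMap_apply, hfz, map_zero]
  have h2 : Polynomial.aeval x f ∈ p := by
    rw [← Ideal.Quotient.eq_zero_iff_mem]
    rw [← Ideal.Quotient.algebraMap_eq, ← Polynomial.aeval_algebraMap_apply,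
      Ideal.Quotient.algebraMap_eq]
    exact h1
  exact Set.disjoint_left.mp hpS h2 ⟨⟨f, hfm⟩, rfl⟩

set_option maxHeartbeats 1000000 in
set_option synthInstance.maxHeartbeats 400000 in
/-- For an algebra `A` of finite expansion over a field `k`, the following are equivalent:
(a) `Spec A` is totally disconnected; (b) every prime of `A` is maximal; (c) every residue
field `κ(p) = Frac(A ⧸ p)` is an algebraic field extension of `k`. -/
theorem quasiProfinite_tfae_over_field (k A : Type*) [Field k] [CommRing A] [Algebra k A]
    (hA : Algebra.FiniteExpansion k A) :
    List.TFAE [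
      TotallyDisconnectedSpace (PrimeSpectrum A),
      ∀ p : Ideal A, p.IsPrime → p.IsMaximal,
      ∀ p : Ideal A, p.IsPrime → Algebra.IsAlgebraic k (FractionRing (A ⧸ p))] := by
  tfae_have 1 → 2 := by
    intro h1 p hp
    obtain ⟨m, hm, hpm⟩ := p.exists_le_maximal hp.ne_top
    set P : PrimeSpectrum A := ⟨p, hp⟩ with hP
    set M : PrimeSpectrum A := ⟨m, hm.isPrime⟩ with hM
    have hsub : (closure ({P} : Set (PrimeSpectrum A))).Subsingleton :=
      (isTotallyDisconnected_of_totallyDisconnectedSpace (closure {P})) (closure {P})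
        subset_rfl isPreconnected_singleton.closure
    have hmem : M ∈ closure ({P} : Set (PrimeSpectrum A)) :=
      (PrimeSpectrum.le_iff_mem_closure P M).mp hpm
    have hMP : M = P := hsub hmem (subset_closure rfl)
    have : p = m := (congrArg PrimeSpectrum.asIdeal hMP).symm
    rw [this]
    exact hm
  tfae_have 2 → 3 := by
    intro h2 p hp
    haveI := hp
    haveI hpm : p.IsMaximal := h2 p hp
    letI : Field (A ⧸ p) := Ideal.Quotient.field p
    obtain ⟨s, hs⟩ := hA
    set B := Algebra.adjoin k (s : Set A) with hB
    let ψ : B →+* A ⧸ p := (Ideal.Quotient.mk p).comp (algebraMap B A)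
    set q := RingHom.ker ψ with hq
    letI : Algebra (B ⧸ q) (A ⧸ p) := (RingHom.kerLift ψ).toAlgebra
    have hinj : Function.Injective (algebraMap (B ⧸ q) (A ⧸ p)) := RingHom.kerLift_injective ψ
    haveI : IsScalarTower k (B ⧸ q) (A ⧸ p) := IsScalarTower.of_algebraMap_eq fun c => by
      show algebraMap k (A ⧸ p) c = RingHom.kerLift ψ (Ideal.Quotient.mk q (algebraMap k B c))
      rw [RingHom.kerLift_mk]
      show algebraMap k (A ⧸ p) c = Ideal.Quotient.mk p (algebraMap B A (algebraMap k B c))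
      rw [← IsScalarTower.algebraMap_apply k B A, IsScalarTower.algebraMap_apply k A (A ⧸ p),
        Ideal.Quotient.algebraMap_eq]
    haveI : Algebra.IsIntegral (B ⧸ q) (A ⧸ p) := by
      constructor
      intro z
      obtain ⟨a, rfl⟩ := Ideal.Quotient.mk_surjective z
      obtain ⟨f, hfm, hf⟩ := hs.isIntegral a
      refine ⟨f.map (Ideal.Quotient.mk q), hfm.map _, ?_⟩
      have hcomp : (algebraMap (B ⧸ q) (A ⧸ p)).comp (Ideal.Quotient.mk q) = ψ :=
        RingHom.ext fun b => RingHom.kerLift_mk ψ b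
      rw [Polynomial.eval₂_map, hcomp]
      have := Polynomial.hom_eval₂ f (algebraMap B A) (Ideal.Quotient.mk p) a
      rw [hf, map_zero] at this
      exact this.symm
    haveI : IsDomain (B ⧸ q) := Function.Injective.isDomain (RingHom.kerLift ψ)
      (RingHom.kerLift_injective ψ)
    have hfield : IsField (B ⧸ q) :=
      (Algebra.IsIntegral.isField_iff_isField (R := B ⧸ q) (S := A ⧸ p) hinj).mpr
        (Field.toIsField _)
    letI : Field (B ⧸ q) := hfield.toField
    haveI : Algebra.FiniteType k B :=
      (Subalgebra.fg_iff_finiteType _).mp (Subalgebra.fg_adjoin_finset s)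
    haveI : Algebra.FiniteType k (B ⧸ q) :=
      Algebra.FiniteType.of_surjective (Ideal.Quotient.mkₐ k q)
        (Ideal.Quotient.mkₐ_surjective k q)
    haveI : Module.Finite k (B ⧸ q) := finite_of_finite_type_of_isJacobsonRing k (B ⧸ q)
    haveI : Algebra.IsIntegral k (B ⧸ q) := Algebra.IsIntegral.of_finite k _
    haveI : Algebra.IsIntegral k (A ⧸ p) := Algebra.IsIntegral.trans (B ⧸ q)
    haveI : Algebra.IsAlgebraic k (A ⧸ p) := inferInstance
    constructor
    intro z
    obtain ⟨⟨a, s⟩, hz⟩ := IsLocalization.surj (nonZeroDivisors (A ⧸ p)) z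
    have hs0 : (s : A ⧸ p) ≠ 0 := nonZeroDivisors.coe_ne_zero s
    have hsne : algebraMap (A ⧸ p) (FractionRing (A ⧸ p)) (s : A ⧸ p) ≠ 0 := fun h =>
      hs0 (IsFractionRing.injective (A ⧸ p) (FractionRing (A ⧸ p)) (by rw [h, map_zero]))
    have hzeq : z = algebraMap (A ⧸ p) (FractionRing (A ⧸ p)) (a * (s : A ⧸ p)⁻¹) := by
      rw [map_mul, map_inv₀, eq_mul_inv_iff_mul_eq₀ hsne]
      exact hz
    rw [hzeq]
    exact IsAlgebraic.algebraMap (Algebra.IsAlgebraic.isAlgebraic _)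
  tfae_have 3 → 1 := by
    intro h3
    haveI : Algebra.IsIntegral k A := isIntegral_of_forall_isAlgebraic h3
    haveI : TotallySeparatedSpace (PrimeSpectrum A) :=
      totallySeparatedSpace_of_isIntegral (k := k)
    infer_instance
  tfae_finish
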